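/- Let Y be a finite nonempty type, α > 0 a real, and let D, μ : Y × Y → ℝ be arbitrary functions. Define L on the open set of functions π : Y → ℝ with strictly positive values by L(π) = −(1/α) * ∑_{(y₁, y₂) ∈ Y × Y} D(y₁, y₂) * μ(y₁, y₂) * log( π(y₁)^α / (π(y₁)^α + π(y₂)^α) ). Then for every such π and every y ∈ Y, the partial derivative of L with respect to the coordinate π(y) at π equals −(1/π(y)) * ∑_{y'} ( D(y, y') * μ(y, y') * π(y')^α − D(y', y) * μ(y', y) * π(y)^α ) / ( π(y)^α + π(y')^α ). -/

import Mathlib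

open Filter

namespace SpoAux

lemma aux1 (α b x : ℝ) (hα : 0 < α) (hb : 0 < b) (hx : 0 < x) :
    HasDerivAt (fun t => Real.log (t ^ α / (t ^ α + b))) (α / x * b / (x ^ α + b)) x := by
  have hxα : (0:ℝ) < x ^ α := Real.rpow_pos_of_pos hx α
  have hden : (0:ℝ) < x ^ α + b := by linarith
  have h1 : HasDerivAt (fun t : ℝ => α * Real.log t) (α * x⁻¹) x :=
    (Real.hasDerivAt_log hx.ne').const_mul α
  have h2 : HasDerivAt (fun t : ℝ => t ^ α) (α * x ^ (α - 1)) x :=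
    Real.hasDerivAt_rpow_const (Or.inl hx.ne')
  have h3 : HasDerivAt (fun t : ℝ => Real.log (t ^ α + b))
      ((α * x ^ (α - 1)) / (x ^ α + b)) x := (h2.add_const b).log hden.ne'
  have h4 := h1.sub h3
  have heq : (fun t => Real.log (t ^ α / (t ^ α + b)))
      =ᶠ[nhds x] fun t => α * Real.log t - Real.log (t ^ α + b) := by
    filter_upwards [eventually_gt_nhds hx] with t ht
    have htα : (0:ℝ) < t ^ α := Real.rpow_pos_of_pos ht α
    rw [Real.log_div htα.ne' (by linarith), Real.log_rpow ht]
  have hval : α * x⁻¹ - (α * x ^ (α - 1)) / (x ^ α + b) = α / x * b / (x ^ α + b) := by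
    have hpow : x ^ (α - 1) = x ^ α / x := by
      rw [Real.rpow_sub hx, Real.rpow_one]
    rw [hpow]
    field_simp
    ring
  rw [← hval]
  exact h4.congr_of_eventuallyEq heq

lemma aux2 (α a x : ℝ) (hα : 0 < α) (ha : 0 < a) (hx : 0 < x) :
    HasDerivAt (fun t => Real.log (a / (a + t ^ α))) (-(α / x * x ^ α / (a + x ^ α))) x := by
  have hxα : (0:ℝ) < x ^ α := Real.rpow_pos_of_pos hx α
  have hden : (0:ℝ) < a + x ^ α := by linarith
  have h2 : HasDerivAt (fun t : ℝ => t ^ α) (α * x ^ (α - 1)) x :=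
    Real.hasDerivAt_rpow_const (Or.inl hx.ne')
  have h3 : HasDerivAt (fun t : ℝ => Real.log (a + t ^ α))
      ((α * x ^ (α - 1)) / (a + x ^ α)) x := (h2.const_add a).log hden.ne'
  have h4 := (hasDerivAt_const x (Real.log a)).sub h3
  have heq : (fun t => Real.log (a / (a + t ^ α)))
      =ᶠ[nhds x] fun t => Real.log a - Real.log (a + t ^ α) := by
    filter_upwards [eventually_gt_nhds hx] with t ht
    have htα : (0:ℝ) < t ^ α := Real.rpow_pos_of_pos ht α
    rw [Real.log_div ha.ne' (by linarith)]
  have hval : 0 - (α * x ^ (α - 1)) / (a + x ^ α) = -(α / x * x ^ α / (a + x ^ α)) := by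
    have hpow : x ^ (α - 1) = x ^ α / x := by
      rw [Real.rpow_sub hx, Real.rpow_one]
    rw [hpow]
    field_simp
    ring
  rw [← hval]
  exact h4.congr_of_eventuallyEq heq

lemma aux3 (α x : ℝ) (hα : 0 < α) (hx : 0 < x) :
    HasDerivAt (fun t => Real.log (t ^ α / (t ^ α + t ^ α))) 0 x := by
  have heq : (fun t => Real.log (t ^ α / (t ^ α + t ^ α)))
      =ᶠ[nhds x] fun _ => Real.log 2⁻¹ := by
    filter_upwards [eventually_gt_nhds hx] with t ht
    have htα : (0:ℝ) < t ^ α := Real.rpow_pos_of_pos ht α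
    have : t ^ α / (t ^ α + t ^ α) = 2⁻¹ := by
      field_simp; ring
    rw [this]
  exact (hasDerivAt_const x (Real.log 2⁻¹)).congr_of_eventuallyEq heq

end SpoAux
open SpoAux

/-- Closed-form gradient of the weighted SPO pairwise preference loss
`L p = -(1/α) * ∑ (y₁,y₂), D (y₁,y₂) * μ (y₁,y₂) * log (p y₁ ^ α / (p y₁ ^ α + p y₂ ^ α))`
in the tabular model: its partial derivative with respect to the coordinate `π y`,
at a point `π` with strictly positive values, equals
`-(1 / π y) * ∑ y', (D (y,y') * μ (y,y') * π y' ^ α - D (y',y) * μ (y',y) * π y ^ α)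
  / (π y ^ α + π y' ^ α)`. -/
theorem spo_weighted_loss_partial_deriv (Y : Type*) [Fintype Y] [Nonempty Y]
    [DecidableEq Y] (α : ℝ) (hα : 0 < α) (D μ : Y × Y → ℝ)
    (L : (Y → ℝ) → ℝ)
    (hL : ∀ p : Y → ℝ, L p = -(1 / α) *
      ∑ yy : Y × Y, D yy * μ yy *
        Real.log ((p yy.1) ^ α / ((p yy.1) ^ α + (p yy.2) ^ α)))
    (π : Y → ℝ) (hπ : ∀ y, 0 < π y) (y : Y) :
    HasDerivAt (fun t : ℝ => L (Function.update π y t))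
      (-(1 / π y) * ∑ y',
        (D (y, y') * μ (y, y') * (π y') ^ α - D (y', y) * μ (y', y) * (π y) ^ α) /
          ((π y) ^ α + (π y') ^ α))
      (π y) := by
  have hπy := hπ y
  set d : Y × Y → ℝ := fun yy =>
    (if yy.1 = y then α / π y * (π yy.2) ^ α / ((π yy.1) ^ α + (π yy.2) ^ α) else 0) -
    (if yy.2 = y then α / π y * (π yy.2) ^ α / ((π yy.1) ^ α + (π yy.2) ^ α) else 0) with hd
  have hterm : ∀ yy : Y × Y, HasDerivAt (fun t : ℝ =>
      D yy * μ yy * Real.log ((Function.update π y t yy.1) ^ α /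
        ((Function.update π y t yy.1) ^ α + (Function.update π y t yy.2) ^ α)))
      (D yy * μ yy * d yy) (π y) := by
    intro yy
    obtain ⟨y₁, y₂⟩ := yy
    rcases eq_or_ne y₁ y with h1 | h1 <;> rcases eq_or_ne y₂ y with h2 | h2
    · simpa [hd, h1, h2, Function.update_apply] using
        (aux3 α (π y) hα hπy).const_mul (D (y, y) * μ (y, y))
    · have h := (aux1 α ((π y₂) ^ α) (π y) hα (Real.rpow_pos_of_pos (hπ y₂) α)
        hπy).const_mul (D (y, y₂) * μ (y, y₂))
      simpa [hd, h1, h2, Function.update_apply] using h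
    · have h := (aux2 α ((π y₁) ^ α) (π y) hα (Real.rpow_pos_of_pos (hπ y₁) α)
        hπy).const_mul (D (y₁, y) * μ (y₁, y))
      simpa [hd, h1, h2, Function.update_apply] using h
    · simpa [hd, h1, h2, Function.update_apply] using hasDerivAt_const (π y)
        (D (y₁, y₂) * μ (y₁, y₂) * Real.log ((π y₁) ^ α / ((π y₁) ^ α + (π y₂) ^ α)))
  have hsum : HasDerivAt (fun t : ℝ => ∑ yy : Y × Y, D yy * μ yy *
      Real.log ((Function.update π y t yy.1) ^ α /
        ((Function.update π y t yy.1) ^ α + (Function.update π y t yy.2) ^ α)))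
      (∑ yy : Y × Y, D yy * μ yy * d yy) (π y) :=
    HasDerivAt.fun_sum fun yy _ => hterm yy
  have hmain := hsum.const_mul (-(1 / α))
  have hfun : (fun t : ℝ => L (Function.update π y t)) =
      fun t : ℝ => -(1 / α) * ∑ yy : Y × Y, D yy * μ yy *
        Real.log ((Function.update π y t yy.1) ^ α /
          ((Function.update π y t yy.1) ^ α + (Function.update π y t yy.2) ^ α)) := by
    funext t; exact hL _
  rw [hfun]
  convert hmain using 1
  case e'_4 => rfl
  case e'_5 => rfl
  rw [Fintype.sum_prod_type]
  simp only [hd, mul_sub, mul_ite, mul_zero]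
  simp only [Finset.sum_sub_distrib, Finset.sum_ite_irrel, Finset.sum_ite_eq',
    Finset.mem_univ, if_true, Finset.sum_const_zero]
  rw [← Finset.sum_sub_distrib, Finset.mul_sum, Finset.mul_sum]
  refine Finset.sum_congr rfl fun y' _ => ?_
  have h1 : (0:ℝ) < (π y) ^ α := Real.rpow_pos_of_pos hπy α
  have h2 : (0:ℝ) < (π y') ^ α := Real.rpow_pos_of_pos (hπ y') α
  have hd1 : (π y) ^ α + (π y') ^ α ≠ 0 := by positivity
  have hd2 : (π y') ^ α + (π y) ^ α ≠ 0 := by positivity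
  field_simp
  ring
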